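/- Let L, L̂ be real n×n matrices, λ ∈ ℝ, and suppose u⁽¹⁾,…,u⁽ᵐ⁾ is a Jordan chain for L (L u⁽¹⁾ = λ u⁽¹⁾ and L u⁽ᵏ⁾ = λ u⁽ᵏ⁾ + u⁽ᵏ⁻¹⁾ for 2 ≤ k ≤ m) and û⁽¹⁾,…,û⁽ᵐ⁾ is a Jordan chain for L̂ with the same eigenvalue λ. Then D(x̂,x) = Σ_{k=1}^m û⁽ᵏ⁾(x̂) u⁽ᵐ⁺¹⁻ᵏ⁾(x) satisfies the duality relation L̂ D = D Lᵀ. -/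

import Mathlib

open Matrix BigOperators

theorem duality_from_jordan_chains {n : ℕ} (m : ℕ) (hm : 1 ≤ m)
    (L Lhat : Matrix (Fin n) (Fin n) ℝ) (lam : ℝ)
    (u uhat : ℕ → Fin n → ℝ)
    (hu1 : L *ᵥ u 1 = lam • u 1)
    (hu : ∀ k, 2 ≤ k → k ≤ m → L *ᵥ u k = lam • u k + u (k - 1))
    (huhat1 : Lhat *ᵥ uhat 1 = lam • uhat 1)
    (huhat : ∀ k, 2 ≤ k → k ≤ m → Lhat *ᵥ uhat k = lam • uhat k + uhat (k - 1))
    (D : Matrix (Fin n) (Fin n) ℝ)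
    (hD : ∀ xhat x, D xhat x = ∑ k ∈ Finset.Icc 1 m, uhat k xhat * u (m + 1 - k) x) :
    Lhat * D = D * Lᵀ := by
  ext i j
  have hLhat : ∀ k ∈ Finset.Icc 1 m, (Lhat *ᵥ uhat k) i =
      lam * uhat k i + (if 2 ≤ k then uhat (k - 1) i else 0) := by
    intro k hk
    simp only [Finset.mem_Icc] at hk
    by_cases h : 2 ≤ k
    · rw [huhat k h hk.2]
      simp [h]
    · have hk1 : k = 1 := by omega
      subst hk1
      rw [huhat1]
      simp [h]
  have hL : ∀ k ∈ Finset.Icc 1 m, (L *ᵥ u (m + 1 - k)) j =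
      lam * u (m + 1 - k) j + (if k ≤ m - 1 then u (m - k) j else 0) := by
    intro k hk
    simp only [Finset.mem_Icc] at hk
    by_cases h : k ≤ m - 1
    · have h2 : 2 ≤ m + 1 - k := by omega
      have h3 : m + 1 - k ≤ m := by omega
      rw [hu _ h2 h3]
      have : m + 1 - k - 1 = m - k := by omega
      simp [this, h]
    · have : m + 1 - k = 1 := by omega
      rw [this, hu1]
      simp [h]
  have e1 : (Lhat * D) i j = ∑ k ∈ Finset.Icc 1 m, (Lhat *ᵥ uhat k) i * u (m + 1 - k) j := by
    simp only [mul_apply, hD, Finset.mul_sum, mulVec, dotProduct, Finset.sum_mul]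
    rw [Finset.sum_comm]
    exact Finset.sum_congr rfl fun _ _ => Finset.sum_congr rfl fun _ _ => by ring
  have e2 : (D * Lᵀ) i j = ∑ k ∈ Finset.Icc 1 m, uhat k i * (L *ᵥ u (m + 1 - k)) j := by
    simp only [mul_apply, hD, transpose_apply, Finset.sum_mul, mulVec, dotProduct,
      Finset.mul_sum]
    rw [Finset.sum_comm]
    exact Finset.sum_congr rfl fun _ _ => Finset.sum_congr rfl fun _ _ => by ring
  have split1 : ∀ k ∈ Finset.Icc 1 m,
      (Lhat *ᵥ uhat k) i * u (m + 1 - k) j =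
      lam * (uhat k i * u (m + 1 - k) j) +
        (if 2 ≤ k then uhat (k - 1) i * u (m + 1 - k) j else 0) := by
    intro k hk
    rw [hLhat k hk]
    by_cases h : 2 ≤ k <;> simp [h] <;> ring
  have split2 : ∀ k ∈ Finset.Icc 1 m,
      uhat k i * (L *ᵥ u (m + 1 - k)) j =
      lam * (uhat k i * u (m + 1 - k) j) +
        (if k ≤ m - 1 then uhat k i * u (m - k) j else 0) := by
    intro k hk
    rw [hL k hk]
    by_cases h : k ≤ m - 1 <;> simp [h] <;> ring
  rw [e1, e2, Finset.sum_congr rfl split1, Finset.sum_congr rfl split2,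
    Finset.sum_add_distrib, Finset.sum_add_distrib]
  congr 1
  rw [← Finset.sum_filter, ← Finset.sum_filter]
  have f1 : (Finset.Icc 1 m).filter (fun k => 2 ≤ k) = Finset.Icc 2 m := by
    ext x; simp [Finset.mem_filter, Finset.mem_Icc]; omega
  have f2 : (Finset.Icc 1 m).filter (fun k => k ≤ m - 1) = Finset.Icc 1 (m - 1) := by
    ext x; simp [Finset.mem_filter, Finset.mem_Icc]; omega
  rw [f1, f2]
  rw [show Finset.Icc 2 m = (Finset.Icc 1 (m - 1)).map
      ⟨fun k => k + 1, add_left_injective 1⟩ by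
    ext x
    simp only [Finset.mem_map, Finset.mem_Icc, Function.Embedding.coeFn_mk]
    constructor
    · rintro ⟨h1, h2⟩; exact ⟨x - 1, by omega, by omega⟩
    · rintro ⟨a, ⟨h1, h2⟩, rfl⟩; simp; omega]
  rw [Finset.sum_map]
  apply Finset.sum_congr rfl
  intro k hk
  simp only [Finset.mem_Icc] at hk
  have h1 : k + 1 - 1 = k := by omega
  have h2 : m + 1 - (k + 1) = m - k := by omega
  simp [Function.Embedding.coeFn_mk, h1, h2]
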